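/- The WEF fairness notion suffers from the inversion paradox for indivisible goods with additive valuations. Concretely, take 3 agents and 5 items e_1, …, e_5 with additive valuations v_1 = v_2 = (10, 10, 11, 12, 37) and v_3 = (10, 10, 11, 12, 57) (listing item values in order), and entitlement vectors b = (0.12, 0.12, 0.76) and b' = (0.11, 0.12, 0.77). Then b' 3-improves b; the set of weighted envy-free complete allocations for b is nonempty and every such allocation gives agent 3 value 80 (agent 3 gets {e_3, e_4, e_5}); the set of weighted envy-free complete allocations for b' is nonempty and every such allocation gives agent 3 value 77. Hence every WEF allocation for b gives agent 3 strictly more value than every WEF allocation for b', even though b' >_3 b. -/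

import Mathlib

namespace Stmt12

def IsPartition {n m : ℕ} (A : Fin n → Finset (Fin m)) : Prop :=
  (∀ i j, i ≠ j → Disjoint (A i) (A j)) ∧ ∀ e, ∃ i, e ∈ A i

def bval {m : ℕ} (w : Fin m → ℝ) (S : Finset (Fin m)) : ℝ := ∑ e ∈ S, w e

def v : Fin 3 → Fin 5 → ℝ :=
  ![![10, 10, 11, 12, 37], ![10, 10, 11, 12, 37], ![10, 10, 11, 12, 57]]

noncomputable def b : Fin 3 → ℝ := ![0.12, 0.12, 0.76]

noncomputable def b' : Fin 3 → ℝ := ![0.11, 0.12, 0.77]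

noncomputable def WEF (β : Fin 3 → ℝ) (A : Fin 3 → Finset (Fin 5)) : Prop :=
  IsPartition A ∧ ∀ i j, (β i / β j) * bval (v i) (A j) ≤ bval (v i) (A i)

/- ### auxiliary integer model -/

def vz : Fin 3 → Fin 5 → ℤ :=
  ![![10, 10, 11, 12, 37], ![10, 10, 11, 12, 37], ![10, 10, 11, 12, 57]]

def bz : Fin 3 → ℤ := ![12, 12, 76]
def bz' : Fin 3 → ℤ := ![11, 12, 77]

def bun (f : Fin 5 → Fin 3) (i : Fin 3) : Finset (Fin 5) :=
  Finset.univ.filter (fun e => f e = i)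

def WEFZ (β : Fin 3 → ℤ) (f : Fin 5 → Fin 3) : Prop :=
  ∀ i j, β i * (∑ e ∈ bun f j, vz i e) ≤ β j * (∑ e ∈ bun f i, vz i e)

instance (β : Fin 3 → ℤ) (f : Fin 5 → Fin 3) : Decidable (WEFZ β f) := by
  unfold WEFZ; infer_instance

lemma v_eq (i : Fin 3) (e : Fin 5) : v i e = (vz i e : ℝ) := by
  fin_cases i <;> fin_cases e <;> norm_num [v, vz]

lemma bval_eq (i : Fin 3) (S : Finset (Fin 5)) :
    bval (v i) S = ((∑ e ∈ S, vz i e : ℤ) : ℝ) := by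
  rw [bval, Int.cast_sum]
  exact Finset.sum_congr rfl fun e _ => v_eq i e

lemma b_eq (i : Fin 3) : b i = (bz i : ℝ) / 100 := by
  fin_cases i <;> norm_num [b, bz]

lemma b'_eq (i : Fin 3) : b' i = (bz' i : ℝ) / 100 := by
  fin_cases i <;> norm_num [b', bz']

lemma bz_pos (i : Fin 3) : (0:ℤ) < bz i := by fin_cases i <;> norm_num [bz]
lemma bz'_pos (i : Fin 3) : (0:ℤ) < bz' i := by fin_cases i <;> norm_num [bz']

lemma ratio_mp {a c X Y : ℝ} (hc : 0 < c) (h : (a / 100) / (c / 100) * X ≤ Y) :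
    a * X ≤ c * Y := by
  have hr : (a / 100) / (c / 100) = a / c := by field_simp
  rw [hr, div_mul_eq_mul_div, div_le_iff₀ hc] at h
  linarith

lemma ratio_mpr {a c X Y : ℝ} (hc : 0 < c) (h : a * X ≤ c * Y) :
    (a / 100) / (c / 100) * X ≤ Y := by
  have hr : (a / 100) / (c / 100) = a / c := by field_simp
  rw [hr, div_mul_eq_mul_div, div_le_iff₀ hc]
  linarith

lemma part_fun {A : Fin 3 → Finset (Fin 5)} (h : IsPartition A) :
    ∃ f : Fin 5 → Fin 3, ∀ i, A i = bun f i := by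
  choose f hf using h.2
  refine ⟨f, fun i => ?_⟩
  ext e
  simp only [bun, Finset.mem_filter, Finset.mem_univ, true_and]
  constructor
  · intro he
    by_contra hne
    exact (Finset.disjoint_left.mp (h.1 (f e) i hne) (hf e)) he
  · rintro rfl; exact hf e

lemma wef_iff (β : Fin 3 → ℤ) (βr : Fin 3 → ℝ) (hbr : ∀ i, βr i = (β i : ℝ) / 100)
    (hβ : ∀ i, 0 < β i) (A : Fin 3 → Finset (Fin 5)) (f : Fin 5 → Fin 3)
    (hA : ∀ i, A i = bun f i) (h : WEF βr A) : WEFZ β f := by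
  intro i j
  have hh := h.2 i j
  rw [hA i, hA j, bval_eq, bval_eq, hbr i, hbr j] at hh
  have hj : (0:ℝ) < (β j : ℝ) := by exact_mod_cast hβ j
  have := ratio_mp hj hh
  exact_mod_cast this

lemma wef_of (β : Fin 3 → ℤ) (βr : Fin 3 → ℝ) (hbr : ∀ i, βr i = (β i : ℝ) / 100)
    (hβ : ∀ i, 0 < β i) (f : Fin 5 → Fin 3) (h : WEFZ β f) : WEF βr (bun f) := by
  constructor
  · constructor
    · intro i j hij
      rw [Finset.disjoint_left]
      intro e he he'
      simp only [bun, Finset.mem_filter, Finset.mem_univ, true_and] at he he'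
      exact hij (he ▸ he')
    · intro e; exact ⟨f e, by simp [bun]⟩
  · intro i j
    have hz := h i j
    have hj : (0:ℝ) < (β j : ℝ) := by exact_mod_cast hβ j
    rw [bval_eq, bval_eq, hbr i, hbr j]
    exact ratio_mpr hj (by exact_mod_cast hz)

set_option maxRecDepth 20000 in
lemma key_b : ∀ f : Fin 5 → Fin 3, WEFZ bz f → bun f 2 = {2, 3, 4} := by decide

set_option maxRecDepth 20000 in
lemma key_b' : ∀ f : Fin 5 → Fin 3, WEFZ bz' f → (∑ e ∈ bun f 2, vz 2 e) = 77 := by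
  decide

lemma ex_b : WEFZ bz ![0, 1, 2, 2, 2] := by decide
lemma ex_b' : WEFZ bz' ![2, 2, 0, 1, 2] := by decide

lemma sum_234 : (∑ e ∈ ({2, 3, 4} : Finset (Fin 5)), vz 2 e) = 80 := by decide

/-- WEF suffers from the inversion paradox: b' 3-improves b, yet
every WEF complete allocation for b gives agent 3 the bundle {e₃,e₄,e₅} of
value 80, while every WEF complete allocation for b' gives agent 3 value 77. -/
theorem stmt_12 :
    (b 2 < b' 2 ∧ ∀ j, j ≠ 2 → b' j ≤ b j) ∧
    (∃ A, WEF b A) ∧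
    (∀ A, WEF b A → A 2 = {2, 3, 4} ∧ bval (v 2) (A 2) = 80) ∧
    (∃ A, WEF b' A) ∧
    (∀ A, WEF b' A → bval (v 2) (A 2) = 77) ∧
    (∀ A A', WEF b A → WEF b' A' → bval (v 2) (A' 2) < bval (v 2) (A 2)) := by
  have hb2 : ∀ A, WEF b A → A 2 = {2, 3, 4} ∧ bval (v 2) (A 2) = 80 := by
    intro A hA
    obtain ⟨f, hf⟩ := part_fun hA.1
    have h2 := key_b f (wef_iff bz b b_eq bz_pos A f hf hA)
    have hA2 : A 2 = {2, 3, 4} := by rw [hf]; exact h2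
    refine ⟨hA2, ?_⟩
    rw [hA2, bval_eq, sum_234]
    norm_num
  have hb'2 : ∀ A, WEF b' A → bval (v 2) (A 2) = 77 := by
    intro A hA
    obtain ⟨f, hf⟩ := part_fun hA.1
    have h2 := key_b' f (wef_iff bz' b' b'_eq bz'_pos A f hf hA)
    rw [hf 2, bval_eq, h2]
    norm_num
  refine ⟨⟨by norm_num [b, b', Matrix.cons_val_two], ?_⟩,
    ⟨_, wef_of bz b b_eq bz_pos _ ex_b⟩, hb2,
    ⟨_, wef_of bz' b' b'_eq bz'_pos _ ex_b'⟩, hb'2, ?_⟩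
  · intro j hj
    fin_cases j
    · norm_num [b, b']
    · norm_num [b, b']
    · exact absurd rfl hj
  · intro A A' hA hA'
    rw [(hb2 A hA).2, hb'2 A' hA']
    norm_num

end Stmt12
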